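/- Let z₀ ∈ ℂ with |z₀| = 1, and let 0 < α < 2, 0 < β < 2 with α + β > 2. Then there is a constant M depending only on α, β such that for all z ∈ ℂ with z ≠ z₀, ∫_{𝔻} |t − z₀|^{−α} |t − z|^{−β} dA(t) ≤ M |z − z₀|^{2 − α − β}, where 𝔻 is the unit disc and dA is Lebesgue area measure. -/

import Mathlib

open MeasureTheory Set Real
open scoped Real

noncomputable section


/-- Polar-coordinate computation: integral of `|t|^P` over an annulus in `ℂ`. -/
lemma vekua_polar (a b P : ℝ) (h0 : 0 ≤ a) (hab : a < b)
    (hii : IntegrableOn (fun x : ℝ => x ^ (P + 1)) (Ioo a b) volume) :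
    IntegrableOn (fun t : ℂ => ‖t‖ ^ P)
      {t : ℂ | a < ‖t‖ ∧ ‖t‖ < b} volume ∧
    ∫ t in {t : ℂ | a < ‖t‖ ∧ ‖t‖ < b}, ‖t‖ ^ P =
      (∫ x in Ioo a b, x ^ (P + 1)) * (2 * π) := by
  set S : Set (ℝ × ℝ) := Ioo a b ×ˢ Ioo (-π) π with hS
  set S₀ : Set (ℝ × ℝ) := {v | a < ‖v.1 + v.2 * Complex.I‖ ∧
      ‖v.1 + v.2 * Complex.I‖ < b} with hS₀
  set g₀ : ℝ × ℝ → ℝ := fun v => ‖v.1 + v.2 * Complex.I‖ ^ P with hg₀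
  have hT : {t : ℂ | a < ‖t‖ ∧ ‖t‖ < b}
      = Complex.measurableEquivRealProd ⁻¹' S₀ := by
    ext t
    simp [hS₀, Complex.re_add_im]
  have hfun : ∀ t : ℂ, ‖t‖ ^ P = g₀ (Complex.measurableEquivRealProd t) := by
    intro t
    simp [hg₀, Complex.re_add_im]
  have hmeasS : MeasurableSet S := measurableSet_Ioo.prod measurableSet_Ioo
  have hStarget : S ⊆ polarCoord.target := by
    intro p hp
    exact ⟨h0.trans_lt hp.1.1, hp.2⟩
  set B : ℝ × ℝ → ℝ × ℝ →L[ℝ] ℝ × ℝ := fun p =>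
    LinearMap.toContinuousLinearMap (Matrix.toLin (Module.Basis.finTwoProd ℝ) (Module.Basis.finTwoProd ℝ)
      !![Real.cos p.2, -p.1 * Real.sin p.2; Real.sin p.2, p.1 * Real.cos p.2]) with hB
  have hder : ∀ p ∈ S, HasFDerivWithinAt polarCoord.symm (B p) S p :=
    fun p _ => (hasFDerivAt_polarCoord_symm p).hasFDerivWithinAt
  have hBdet : ∀ p, (B p).det = p.1 := by
    intro p
    conv_rhs => rw [← one_mul p.1, ← Real.cos_sq_add_sin_sq p.2]
    simp only [hB, neg_mul, LinearMap.det_toContinuousLinearMap, LinearMap.det_toLin,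
      Matrix.det_fin_two_of, sub_neg_eq_add]
    ring
  have hinj : InjOn polarCoord.symm S := by
    have h := polarCoord.symm.injOn
    rw [OpenPartialHomeomorph.symm_source] at h
    exact h.mono hStarget
  have habs : ∀ p : ℝ × ℝ,
      ‖↑(polarCoord.symm p).1 + ↑(polarCoord.symm p).2 * Complex.I‖ = |p.1| := by
    intro p
    have h1 : ((polarCoord.symm p).1 : ℂ) + ((polarCoord.symm p).2 : ℂ) * Complex.I
        = Complex.polarCoord.symm p := by
      rw [Complex.polarCoord_symm_apply, polarCoord_symm_apply]
      push_cast
      ring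
    rw [h1, Complex.norm_polarCoord_symm]
  have himsub : polarCoord.symm '' S ⊆ S₀ := by
    rintro v ⟨p, hp, rfl⟩
    have hpos : 0 < p.1 := h0.trans_lt hp.1.1
    refine ⟨?_, ?_⟩
    · rw [habs p, abs_of_pos hpos]; exact hp.1.1
    · rw [habs p, abs_of_pos hpos]; exact hp.1.2
  have hnull : S₀ \ polarCoord.symm '' S ⊆ (univ : Set ℝ) ×ˢ ({0} : Set ℝ) := by
    rintro ⟨x, y⟩ ⟨hv, hnot⟩
    by_contra hy
    apply hnot
    have hy0 : y ≠ 0 := fun h => hy (by simp [h])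
    set z : ℂ := x + y * Complex.I with hz
    have hzre : z.re = x := by simp [hz]
    have hzim : z.im = y := by simp [hz]
    have hzne : z ≠ 0 := by
      intro h
      apply hy0
      rw [← hzim, h, Complex.zero_im]
    have habsne : ‖z‖ ≠ 0 := by
      simpa using hzne
    have hargpi : Complex.arg z < π := by
      rcases lt_or_eq_of_le (Complex.arg_le_pi z) with h | h
      · exact h
      · exact absurd ((Complex.arg_eq_pi_iff.mp h).2) (by rw [hzim]; exact hy0)
    refine ⟨(‖z‖, Complex.arg z), ⟨⟨hv.1, hv.2⟩, Complex.neg_pi_lt_arg z, hargpi⟩, ?_⟩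
    rw [polarCoord_symm_apply]
    have hc : ‖z‖ * Real.cos (Complex.arg z) = x := by
      rw [Complex.cos_arg hzne, ← hzre]
      field_simp
    have hs' : ‖z‖ * Real.sin (Complex.arg z) = y := by
      rw [Complex.sin_arg, ← hzim]
      field_simp
    rw [hc, hs']
  have hnullmeas : volume ((univ : Set ℝ) ×ˢ ({0} : Set ℝ)) = 0 := by
    rw [Measure.volume_eq_prod, Measure.prod_prod]
    simp
  have haeeq : S₀ =ᵐ[volume] polarCoord.symm '' S := by
    rw [ae_eq_set]
    constructor
    · exact measure_mono_null hnull hnullmeas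
    · rw [diff_eq_empty.mpr himsub]
      exact measure_empty
  have hrestr : volume.restrict S₀ = volume.restrict (polarCoord.symm '' S) :=
    Measure.restrict_congr_set haeeq
  have hInt2 : IntegrableOn g₀ (polarCoord.symm '' S) volume ↔
      IntegrableOn (fun p => |(B p).det| • g₀ (polarCoord.symm p)) S volume :=
    integrableOn_image_iff_integrableOn_abs_det_fderiv_smul volume hmeasS hder hinj g₀
  have hIntEq : ∫ v in polarCoord.symm '' S, g₀ v =
      ∫ p in S, |(B p).det| • g₀ (polarCoord.symm p) :=
    integral_image_eq_integral_abs_det_fderiv_smul volume hmeasS hder hinj g₀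
  have hcong : ∀ p ∈ S, (fun q : ℝ × ℝ => q.1 ^ (P + 1) * 1) p
      = |(B p).det| • g₀ (polarCoord.symm p) := by
    intro p hp
    have hpos : 0 < p.1 := h0.trans_lt hp.1.1
    simp only [hBdet, abs_of_pos hpos, smul_eq_mul, hg₀, habs p]
    rw [Real.rpow_add_one hpos.ne']
    ring
  have hF : IntegrableOn (fun p : ℝ × ℝ => p.1 ^ (P + 1) * 1) S volume := by
    rw [hS, IntegrableOn, Measure.volume_eq_prod, ← Measure.prod_restrict]
    exact Integrable.mul_prod hii (integrableOn_const (by simp [Real.volume_Ioo]))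
  have hFval : ∫ p in S, p.1 ^ (P + 1) * 1 = (∫ x in Ioo a b, x ^ (P + 1)) * (2 * π) := by
    have h2 : ∫ p in (Ioo a b ×ˢ Ioo (-π) π), p.1 ^ (P + 1) * 1 ∂(volume.prod volume)
        = (∫ x in Ioo a b, x ^ (P + 1)) * (∫ _ in Ioo (-π) π, (1 : ℝ)) :=
      setIntegral_prod_mul (fun x => x ^ (P + 1)) (fun _ => (1 : ℝ)) (Ioo a b) (Ioo (-π) π)
    rw [hS, Measure.volume_eq_prod ℝ ℝ, h2]
    congr 1
    rw [setIntegral_const, smul_eq_mul, mul_one, Real.volume_real_Ioo,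
      max_eq_left (by linarith [Real.pi_pos])]
    ring
  have hfun' : (fun t : ℂ => ‖t‖ ^ P) = g₀ ∘ Complex.measurableEquivRealProd :=
    funext hfun
  constructor
  · rw [hfun', hT]
    refine (MeasurePreserving.integrableOn_comp_preimage
      Complex.volume_preserving_equiv_real_prod
      Complex.measurableEquivRealProd.measurableEmbedding).mpr ?_
    rw [IntegrableOn, hrestr]
    exact hInt2.mpr ((hF.congr_fun hcong hmeasS))
  · calc ∫ t in {t : ℂ | a < ‖t‖ ∧ ‖t‖ < b}, ‖t‖ ^ P
        = ∫ t in Complex.measurableEquivRealProd ⁻¹' S₀,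
            g₀ (Complex.measurableEquivRealProd t) := by
          rw [← hT]; exact setIntegral_congr_fun
            (continuous_norm.measurable measurableSet_Ioo) (fun t _ => hfun t)
      _ = ∫ v in S₀, g₀ v := MeasurePreserving.setIntegral_preimage_emb
            Complex.volume_preserving_equiv_real_prod
            Complex.measurableEquivRealProd.measurableEmbedding g₀ S₀
      _ = ∫ v in polarCoord.symm '' S, g₀ v := by rw [setIntegral_congr_set haeeq]
      _ = ∫ p in S, |(B p).det| • g₀ (polarCoord.symm p) := hIntEq
      _ = ∫ p in S, p.1 ^ (P + 1) * 1 :=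
            (setIntegral_congr_fun hmeasS hcong).symm
      _ = (∫ x in Ioo a b, x ^ (P + 1)) * (2 * π) := hFval

/-- Translated and evaluated version. -/
lemma vekua_eval (c : ℂ) (a b P : ℝ) (h0 : 0 ≤ a) (hab : a < b)
    (hP : -1 < P + 1 ∨ 0 < a) (hPne : P + 2 ≠ 0) :
    IntegrableOn (fun t : ℂ => ‖t - c‖ ^ P)
      {t : ℂ | a < ‖t - c‖ ∧ ‖t - c‖ < b} volume ∧
    ∫ t in {t : ℂ | a < ‖t - c‖ ∧ ‖t - c‖ < b},
        ‖t - c‖ ^ P =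
      (2 * π) * ((b ^ (P + 2) - a ^ (P + 2)) / (P + 2)) := by
  have h0b : (0:ℝ) ∉ Set.uIcc a b ∨ -1 < P + 1 := by
    rcases hP with h | h
    · exact Or.inr h
    · left
      rw [Set.uIcc_of_le hab.le]
      rintro ⟨h1, -⟩
      linarith
  have hii : IntegrableOn (fun x : ℝ => x ^ (P + 1)) (Ioo a b) volume := by
    rcases hP with h | h
    · exact (intervalIntegrable_iff_integrableOn_Ioo_of_le hab.le).mp
        (intervalIntegral.intervalIntegrable_rpow' h)
    · refine (intervalIntegrable_iff_integrableOn_Ioo_of_le hab.le).mp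
        (intervalIntegral.intervalIntegrable_rpow (Or.inr ?_))
      rw [Set.uIcc_of_le hab.le]
      rintro ⟨h1, -⟩
      linarith
  have hval : ∫ x in Ioo a b, x ^ (P + 1) = (b ^ (P + 2) - a ^ (P + 2)) / (P + 2) := by
    rw [← integral_Ioc_eq_integral_Ioo, ← intervalIntegral.integral_of_le hab.le,
      integral_rpow]
    · norm_num [show P + 1 + 1 = P + 2 by ring]
    · rcases hP with h | h
      · exact Or.inl h
      · refine Or.inr ⟨fun hc => hPne (by linarith), ?_⟩
        rw [Set.uIcc_of_le hab.le]
        rintro ⟨h1, -⟩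
        linarith
  obtain ⟨h1, h2⟩ := vekua_polar a b P h0 hab hii
  have hmp : MeasurePreserving (fun x : ℂ => x + c) volume volume :=
    measurePreserving_add_right volume c
  have hemb : MeasurableEmbedding (fun x : ℂ => x + c) :=
    (MeasurableEquiv.addRight c).measurableEmbedding
  have hpre : (fun x : ℂ => x + c) ⁻¹'
      {t : ℂ | a < ‖t - c‖ ∧ ‖t - c‖ < b}
      = {t : ℂ | a < ‖t‖ ∧ ‖t‖ < b} := by
    ext x
    simp
  constructor
  · refine (hmp.integrableOn_comp_preimage hemb
      (f := fun t : ℂ => ‖t - c‖ ^ P)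
      (s := {t : ℂ | a < ‖t - c‖ ∧ ‖t - c‖ < b})).mp ?_
    rw [hpre]
    refine h1.congr_fun (fun x _ => ?_) (continuous_norm.measurable measurableSet_Ioo)
    simp [Function.comp]
  · have := hmp.setIntegral_preimage_emb hemb (fun t : ℂ => ‖t - c‖ ^ P)
      {t : ℂ | a < ‖t - c‖ ∧ ‖t - c‖ < b}
    rw [hpre] at this
    rw [← this, mul_comm, ← hval, ← h2]
    refine setIntegral_congr_fun (continuous_norm.measurable measurableSet_Ioo)
      (fun x _ => ?_)
    simp


open MeasureTheory

/-- Vekua's estimate: for `0 < α < 2`, `0 < β < 2`, `α + β > 2`,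
there is a constant `M` depending only on `α, β` such that for every `z₀` with
`|z₀| = 1` and every `z ≠ z₀`,
`∫_{𝔻} |t − z₀|^{−α} |t − z|^{−β} dA(t) ≤ M |z − z₀|^{2 − α − β}`. -/
theorem stmt14 (α β : ℝ) (hα0 : 0 < α) (hα2 : α < 2) (hβ0 : 0 < β) (hβ2 : β < 2)
    (hαβ : 2 < α + β) :
    ∃ M : ℝ, ∀ z₀ : ℂ, ‖z₀‖ = 1 → ∀ z : ℂ, z ≠ z₀ →
      ∫ t in Metric.ball (0 : ℂ) 1, ‖t - z₀‖ ^ (-α) * ‖t - z‖ ^ (-β) ≤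
        M * ‖z - z₀‖ ^ (2 - α - β) := by
  have hπ := Real.pi_pos
  refine ⟨2 * π / (2 - α) * 2 ^ (α + β - 2) + 2 * π / (2 - β) * 2 ^ (α + β - 2)
      + 2 * π * 4 ^ β / (α + β - 2) * 4 ^ (α + β - 2), ?_⟩
  intro z₀ hz₀ z hz
  set δ : ℝ := ‖z - z₀‖ with hδ
  have hδ0 : 0 < δ := norm_pos_iff.mpr (sub_ne_zero.mpr hz)
  have h2δ : 0 < δ / 2 := by linarith
  have h4δ : 0 < δ / 4 := by linarith
  obtain ⟨hI₁, hV₁⟩ := vekua_eval z₀ 0 (δ/2) (-α) le_rfl h2δ (Or.inl (by linarith))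
    (by intro h; linarith)
  obtain ⟨hI₂, hV₂⟩ := vekua_eval z 0 (δ/2) (-β) le_rfl h2δ (Or.inl (by linarith))
    (by intro h; linarith)
  obtain ⟨hI₃, hV₃⟩ := vekua_eval z₀ (δ/4) (2+δ) (-(α+β)) h4δ.le (by linarith)
    (Or.inr h4δ) (by intro h; linarith)
  set A₁ : Set ℂ := {t : ℂ | 0 < ‖t - z₀‖ ∧ ‖t - z₀‖ < δ/2} with hA₁def
  set A₂ : Set ℂ := {t : ℂ | 0 < ‖t - z‖ ∧ ‖t - z‖ < δ/2} with hA₂def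
  set A₃ : Set ℂ := {t : ℂ | δ/4 < ‖t - z₀‖ ∧ ‖t - z₀‖ < 2+δ}
    with hA₃def
  have hm₁ : MeasurableSet A₁ :=
    (continuous_norm.comp (continuous_id.sub continuous_const)).measurable
      measurableSet_Ioo
  have hm₂ : MeasurableSet A₂ :=
    (continuous_norm.comp (continuous_id.sub continuous_const)).measurable
      measurableSet_Ioo
  have hm₃ : MeasurableSet A₃ :=
    (continuous_norm.comp (continuous_id.sub continuous_const)).measurable
      measurableSet_Ioo
  set f₁ : ℂ → ℝ := fun t => (δ/2) ^ (-β) * ‖t - z₀‖ ^ (-α) with hf₁def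
  set f₂ : ℂ → ℝ := fun t => (δ/2) ^ (-α) * ‖t - z‖ ^ (-β) with hf₂def
  set f₃ : ℂ → ℝ := fun t => (4:ℝ) ^ β * ‖t - z₀‖ ^ (-(α+β)) with hf₃def
  have hInd₁ : Integrable (A₁.indicator f₁) volume :=
    (integrable_indicator_iff hm₁).mpr (hI₁.const_mul _)
  have hInd₂ : Integrable (A₂.indicator f₂) volume :=
    (integrable_indicator_iff hm₂).mpr (hI₂.const_mul _)
  have hInd₃ : Integrable (A₃.indicator f₃) volume :=
    (integrable_indicator_iff hm₃).mpr (hI₃.const_mul _)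
  have hgInt : Integrable (fun t => A₁.indicator f₁ t + A₂.indicator f₂ t + A₃.indicator f₃ t)
      volume := (hInd₁.add hInd₂).add hInd₃
  have hn₁ : ∀ t, 0 ≤ A₁.indicator f₁ t := fun t =>
    Set.indicator_nonneg (fun x _ => by simp only [hf₁def]; positivity) t
  have hn₂ : ∀ t, 0 ≤ A₂.indicator f₂ t := fun t =>
    Set.indicator_nonneg (fun x _ => by simp only [hf₂def]; positivity) t
  have hn₃ : ∀ t, 0 ≤ A₃.indicator f₃ t := fun t =>
    Set.indicator_nonneg (fun x _ => by simp only [hf₃def]; positivity) t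
  have hgnn : ∀ t, 0 ≤ A₁.indicator f₁ t + A₂.indicator f₂ t + A₃.indicator f₃ t := fun t =>
    add_nonneg (add_nonneg (hn₁ t) (hn₂ t)) (hn₃ t)
  -- pointwise bound on the disc
  have hfg : ∀ t ∈ Metric.ball (0:ℂ) 1,
      ‖t - z₀‖ ^ (-α) * ‖t - z‖ ^ (-β) ≤
        A₁.indicator f₁ t + A₂.indicator f₂ t + A₃.indicator f₃ t := by
    intro t ht
    have htn : ‖t‖ < 1 := by
      simpa [Complex.dist_eq] using Metric.mem_ball.mp ht
    have hu0 : 0 ≤ ‖t - z₀‖ := norm_nonneg _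
    have hw0 : 0 ≤ ‖t - z‖ := norm_nonneg _
    rcases eq_or_lt_of_le hu0 with hu | hu
    · rw [← hu, Real.zero_rpow (by intro h; linarith : -α ≠ 0), zero_mul]
      exact hgnn t
    rcases eq_or_lt_of_le hw0 with hw | hw
    · rw [← hw, Real.zero_rpow (by intro h; linarith : -β ≠ 0), mul_zero]
      exact hgnn t
    have ht1 : δ ≤ ‖t - z₀‖ + ‖t - z‖ := by
      have h := norm_sub_le (t - z₀) (t - z)
      rw [show (t - z₀) - (t - z) = z - z₀ by ring] at h
      simpa [hδ, add_comm] using h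
    have ht2 : ‖t - z₀‖ ≤ δ + ‖t - z‖ := by
      have h := norm_add_le (z - z₀) (t - z)
      rw [show (z - z₀) + (t - z) = t - z₀ by ring] at h
      simpa [hδ] using h
    have hub : ‖t - z₀‖ < 2 := by
      have h := norm_sub_le t z₀
      simp only [hz₀] at h
      linarith
    by_cases hc₁ : ‖t - z₀‖ < δ/2
    · have hwge : δ/2 ≤ ‖t - z‖ := by linarith
      have hle : ‖t - z‖ ^ (-β) ≤ (δ/2) ^ (-β) :=
        Real.rpow_le_rpow_of_nonpos h2δ hwge (by linarith)
      have hmem : t ∈ A₁ := ⟨hu, hc₁⟩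
      calc ‖t - z₀‖ ^ (-α) * ‖t - z‖ ^ (-β)
          ≤ ‖t - z₀‖ ^ (-α) * (δ/2) ^ (-β) :=
            mul_le_mul_of_nonneg_left hle (Real.rpow_nonneg hu0 _)
        _ = A₁.indicator f₁ t := by rw [Set.indicator_of_mem hmem, hf₁def]; ring
        _ ≤ _ := by have := hn₂ t; have := hn₃ t; linarith
    · by_cases hc₂ : ‖t - z‖ < δ/2
      · have huge : δ/2 ≤ ‖t - z₀‖ := not_lt.mp hc₁
        have hle : ‖t - z₀‖ ^ (-α) ≤ (δ/2) ^ (-α) :=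
          Real.rpow_le_rpow_of_nonpos h2δ huge (by linarith)
        have hmem : t ∈ A₂ := ⟨hw, hc₂⟩
        calc ‖t - z₀‖ ^ (-α) * ‖t - z‖ ^ (-β)
            ≤ (δ/2) ^ (-α) * ‖t - z‖ ^ (-β) :=
              mul_le_mul_of_nonneg_right hle (Real.rpow_nonneg hw0 _)
          _ = A₂.indicator f₂ t := by rw [Set.indicator_of_mem hmem, hf₂def]
          _ ≤ _ := by have := hn₁ t; have := hn₃ t; linarith
      · have huge : δ/2 ≤ ‖t - z₀‖ := not_lt.mp hc₁
        have hwge : δ/2 ≤ ‖t - z‖ := not_lt.mp hc₂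
        have hq : ‖t - z₀‖ / 4 ≤ ‖t - z‖ := by
          rcases le_or_gt (‖t - z₀‖) (2*δ) with h | h
          · linarith
          · linarith
        have hmem : t ∈ A₃ := ⟨by linarith, by linarith⟩
        have hle : ‖t - z‖ ^ (-β) ≤ (‖t - z₀‖ / 4) ^ (-β) :=
          Real.rpow_le_rpow_of_nonpos (by linarith) hq (by linarith)
        have hc4 : (‖t - z₀‖ / 4) ^ (-β)
            = 4 ^ β * ‖t - z₀‖ ^ (-β) := by
          rw [Real.div_rpow hu0 (by norm_num : (0:ℝ) ≤ 4),
            Real.rpow_neg (by norm_num : (0:ℝ) ≤ 4), div_eq_mul_inv, inv_inv]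
          ring
        calc ‖t - z₀‖ ^ (-α) * ‖t - z‖ ^ (-β)
            ≤ ‖t - z₀‖ ^ (-α) * (‖t - z₀‖ / 4) ^ (-β) :=
              mul_le_mul_of_nonneg_left hle (Real.rpow_nonneg hu0 _)
          _ = 4 ^ β * ‖t - z₀‖ ^ (-(α+β)) := by
              rw [hc4, show ‖t - z₀‖ ^ (-α) * (4 ^ β * ‖t - z₀‖ ^ (-β))
                = 4 ^ β * (‖t - z₀‖ ^ (-α) * ‖t - z₀‖ ^ (-β)) by ring,
                ← Real.rpow_add hu]
              congr 1
              ring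
          _ = A₃.indicator f₃ t := by rw [Set.indicator_of_mem hmem, hf₃def]
          _ ≤ _ := by have := hn₁ t; have := hn₂ t; linarith
  -- integral chain
  have hmono₁ : ∫ t in Metric.ball (0:ℂ) 1,
      ‖t - z₀‖ ^ (-α) * ‖t - z‖ ^ (-β)
      ≤ ∫ t in Metric.ball (0:ℂ) 1,
          (A₁.indicator f₁ t + A₂.indicator f₂ t + A₃.indicator f₃ t) :=
    integral_mono_of_nonneg (ae_of_all _ fun t => by positivity) hgInt.restrict
      ((ae_restrict_iff' Metric.isOpen_ball.measurableSet).mpr (ae_of_all _ hfg))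
  have hmono₂ : ∫ t in Metric.ball (0:ℂ) 1,
      (A₁.indicator f₁ t + A₂.indicator f₂ t + A₃.indicator f₃ t)
      ≤ ∫ t, (A₁.indicator f₁ t + A₂.indicator f₂ t + A₃.indicator f₃ t) :=
    integral_mono_measure Measure.restrict_le_self (ae_of_all _ hgnn) hgInt
  have hsplit : ∫ t, (A₁.indicator f₁ t + A₂.indicator f₂ t + A₃.indicator f₃ t)
      = (∫ t, A₁.indicator f₁ t) + (∫ t, A₂.indicator f₂ t) + (∫ t, A₃.indicator f₃ t) := by
    have hI12 : Integrable (fun t => A₁.indicator f₁ t + A₂.indicator f₂ t) volume :=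
      hInd₁.add hInd₂
    rw [integral_add hI12 hInd₃, integral_add hInd₁ hInd₂]
  have hIv₁ : ∫ t, A₁.indicator f₁ t
      = (δ/2) ^ (-β) * (2 * π * (((δ/2) ^ (-α + 2) - (0:ℝ) ^ (-α + 2)) / (-α + 2))) := by
    rw [integral_indicator hm₁, hf₁def, integral_const_mul, hV₁]
  have hIv₂ : ∫ t, A₂.indicator f₂ t
      = (δ/2) ^ (-α) * (2 * π * (((δ/2) ^ (-β + 2) - (0:ℝ) ^ (-β + 2)) / (-β + 2))) := by
    rw [integral_indicator hm₂, hf₂def, integral_const_mul, hV₂]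
  have hIv₃ : ∫ t, A₃.indicator f₃ t
      = 4 ^ β * (2 * π * (((2+δ) ^ (-(α+β) + 2) - (δ/4) ^ (-(α+β) + 2)) / (-(α+β) + 2))) := by
    rw [integral_indicator hm₃, hf₃def, integral_const_mul, hV₃]
  -- arithmetic
  have pow2 : ∀ s : ℝ, (δ/2) ^ s = δ ^ s * 2 ^ (-s) := by
    intro s
    rw [Real.div_rpow hδ0.le (by norm_num : (0:ℝ) ≤ 2),
      Real.rpow_neg (by norm_num : (0:ℝ) ≤ 2)]
    ring
  have pow4 : ∀ s : ℝ, (δ/4) ^ s = δ ^ s * 4 ^ (-s) := by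
    intro s
    rw [Real.div_rpow hδ0.le (by norm_num : (0:ℝ) ≤ 4),
      Real.rpow_neg (by norm_num : (0:ℝ) ≤ 4)]
    ring
  have hT₁ : (δ/2) ^ (-β) * (2 * π * (((δ/2) ^ (-α + 2) - (0:ℝ) ^ (-α + 2)) / (-α + 2)))
      = 2 * π / (2 - α) * 2 ^ (α + β - 2) * δ ^ (2 - α - β) := by
    rw [Real.zero_rpow (by intro h; linarith : -α + 2 ≠ 0), sub_zero,
      show (δ/2) ^ (-β) * (2 * π * ((δ/2) ^ (-α + 2) / (-α + 2)))
        = ((δ/2) ^ (-β) * (δ/2) ^ (-α + 2)) * (2 * π / (-α + 2)) by ring,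
      ← Real.rpow_add h2δ, show -β + (-α + 2) = 2 - α - β by ring, pow2,
      show -(2 - α - β) = α + β - 2 by ring]
    ring
  have hT₂ : (δ/2) ^ (-α) * (2 * π * (((δ/2) ^ (-β + 2) - (0:ℝ) ^ (-β + 2)) / (-β + 2)))
      = 2 * π / (2 - β) * 2 ^ (α + β - 2) * δ ^ (2 - α - β) := by
    rw [Real.zero_rpow (by intro h; linarith : -β + 2 ≠ 0), sub_zero,
      show (δ/2) ^ (-α) * (2 * π * ((δ/2) ^ (-β + 2) / (-β + 2)))
        = ((δ/2) ^ (-α) * (δ/2) ^ (-β + 2)) * (2 * π / (-β + 2)) by ring,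
      ← Real.rpow_add h2δ, show -α + (-β + 2) = 2 - α - β by ring, pow2,
      show -(2 - α - β) = α + β - 2 by ring]
    ring
  have hT₃ : 4 ^ β * (2 * π * (((2+δ) ^ (-(α+β) + 2) - (δ/4) ^ (-(α+β) + 2)) / (-(α+β) + 2)))
      ≤ 2 * π * 4 ^ β / (α + β - 2) * 4 ^ (α + β - 2) * δ ^ (2 - α - β) := by
    have hc : 0 < α + β - 2 := by linarith
    have hb : (0:ℝ) ≤ (2+δ) ^ (-(α+β) + 2) := Real.rpow_nonneg (by linarith) _
    have hkey : ((2+δ) ^ (-(α+β) + 2) - (δ/4) ^ (-(α+β) + 2)) / (-(α+β) + 2)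
        ≤ (δ/4) ^ (-(α+β) + 2) / (α + β - 2) := by
      rw [show (-(α+β) + 2 : ℝ) = -(α + β - 2) by ring, div_neg, ← neg_div, neg_sub]
      exact (div_le_div_iff_of_pos_right hc).mpr
        (by linarith [Real.rpow_nonneg (show (0:ℝ) ≤ 2+δ by linarith) (-(α+β-2))])
    calc 4 ^ β * (2 * π * (((2+δ) ^ (-(α+β) + 2) - (δ/4) ^ (-(α+β) + 2)) / (-(α+β) + 2)))
        = (4 ^ β * (2 * π)) * (((2+δ) ^ (-(α+β) + 2) - (δ/4) ^ (-(α+β) + 2)) / (-(α+β) + 2)) :=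
          by ring
      _ ≤ (4 ^ β * (2 * π)) * ((δ/4) ^ (-(α+β) + 2) / (α + β - 2)) :=
          mul_le_mul_of_nonneg_left hkey (by positivity)
      _ = 2 * π * 4 ^ β / (α + β - 2) * 4 ^ (α + β - 2) * δ ^ (2 - α - β) := by
          rw [pow4, show (-(-(α+β) + 2) : ℝ) = α + β - 2 by ring,
            show (-(α+β) + 2 : ℝ) = 2 - α - β by ring]
          ring
  have hfinal : 2 * π / (2 - α) * 2 ^ (α + β - 2) * δ ^ (2 - α - β)
      + 2 * π / (2 - β) * 2 ^ (α + β - 2) * δ ^ (2 - α - β)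
      + 2 * π * 4 ^ β / (α + β - 2) * 4 ^ (α + β - 2) * δ ^ (2 - α - β)
      = (2 * π / (2 - α) * 2 ^ (α + β - 2) + 2 * π / (2 - β) * 2 ^ (α + β - 2)
        + 2 * π * 4 ^ β / (α + β - 2) * 4 ^ (α + β - 2)) * δ ^ (2 - α - β) := by ring
  linarith [hmono₁, hmono₂, hsplit, hIv₁, hIv₂, hIv₃, hT₁, hT₂, hT₃, hfinal]
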